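/- arXiv:1709.02047 — 3 statements merged into one kernel-verified Lean document; each statement's English description precedes it below -/
import Mathlib

section
/- Let N be a positive integer and let f, g be N-times differentiable real functions on an open interval I. Then the alternating sum ∑_{k=0}^{N} (-1)^k C(N,k) g^k D^{N-1}(g^{N-k} f) is identically zero on I, where D^{N-1} denotes the (N-1)-st derivative. -/
open scoped BigOperators

/-- Iterated derivative within of a finite sum. -/
lemma iteratedDerivWithin_finset_sum {s : Set ℝ} (hu : UniqueDiffOn ℝ s) {x : ℝ}
    (hx : x ∈ s) (n : ℕ) {ι : Type*} (t : Finset ι) (F : ι → ℝ → ℝ)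
    (hF : ∀ i ∈ t, ContDiffOn ℝ n (F i) s) :
    iteratedDerivWithin n (fun y => ∑ i ∈ t, F i y) s x
      = ∑ i ∈ t, iteratedDerivWithin n (F i) s x := by
  classical
  induction t using Finset.induction with
  | empty =>
      simp only [Finset.sum_empty]
      have : iteratedDerivWithin n (fun _ : ℝ => (0 : ℝ)) s x
          = iteratedDerivWithin n ((0 : ℝ) • fun _ : ℝ => (0 : ℝ)) s x := by
        congr 1; ext y; simp
      rw [this, iteratedDerivWithin_const_smul hx hu _ contDiffWithinAt_const]
      simp
  | insert a t' hi ih =>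
      have hFa := hF a (Finset.mem_insert_self a t')
      have hFt : ∀ i ∈ t', ContDiffOn ℝ n (F i) s := fun i hi' =>
        hF i (Finset.mem_insert_of_mem hi')
      have hsum : ContDiffOn ℝ n (fun y => ∑ i ∈ t', F i y) s :=
        ContDiffOn.sum hFt
      simp only [Finset.sum_insert hi]
      have : iteratedDerivWithin n (fun y => F a y + ∑ i ∈ t', F i y) s x
          = iteratedDerivWithin n (F a + fun y => ∑ i ∈ t', F i y) s x := rfl
      rw [this, iteratedDerivWithin_add hx hu (hFa x hx) (hsum x hx), ih hFt]

/-- If `φ x = 0`, then all derivatives of `φ^n * f` of order `< n` vanish at `x`. -/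
lemma iteratedDerivWithin_pow_mul_eq_zero (n : ℕ) :
    ∀ (s : Set ℝ), IsOpen s → ∀ x ∈ s, ∀ (φ f : ℝ → ℝ),
      ContDiffOn ℝ n φ s → ContDiffOn ℝ n f s → φ x = 0 →
      ∀ j < n, iteratedDerivWithin j (fun y => φ y ^ n * f y) s x = 0 := by
  induction n with
  | zero => intro s _ x _ φ f _ _ _ j hj; omega
  | succ n IH =>
      intro s hso x hx φ f hφ hf hφx j hj
      have hu : UniqueDiffOn ℝ s := hso.uniqueDiffOn
      match j with
      | 0 =>
          simp [iteratedDerivWithin_zero, hφx]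
      | (m + 1) =>
          rw [iteratedDerivWithin_succ']
          -- the derivative of φ^(n+1) * f on s
          set h : ℝ → ℝ := fun y =>
            ((n : ℝ) + 1) * derivWithin φ s y * f y + φ y * derivWithin f s y with hh
          have hone : (1 : WithTop ℕ∞) ≤ (n + 1 : ℕ) := by
            exact_mod_cast Nat.one_le_iff_ne_zero.mpr (Nat.succ_ne_zero n)
          have heq : Set.EqOn (derivWithin (fun y => φ y ^ (n + 1) * f y) s)
              (fun y => φ y ^ n * h y) s := by
            intro y hy
            have hφd : HasDerivWithinAt φ (derivWithin φ s y) s y :=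
              ((hφ.differentiableOn (by simp)) y hy).hasDerivWithinAt
            have hfd : HasDerivWithinAt f (derivWithin f s y) s y :=
              ((hf.differentiableOn (by simp)) y hy).hasDerivWithinAt
            have hprod := (hφd.fun_pow (n + 1)).fun_mul hfd
            have := hprod.derivWithin (hu.uniqueDiffWithinAt hy)
            rw [this]
            simp only [hh, Nat.add_sub_cancel, Nat.cast_add, Nat.cast_one]
            ring
          rw [iteratedDerivWithin_congr heq hx]
          have hφ' : ContDiffOn ℝ n φ s := hφ.of_le (by exact_mod_cast Nat.le_succ n)
          have hf' : ContDiffOn ℝ n f s := hf.of_le (by exact_mod_cast Nat.le_succ n)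
          have hdφ : ContDiffOn ℝ n (derivWithin φ s) s :=
            hφ.derivWithin hu (by exact_mod_cast le_refl (n + 1))
          have hdf : ContDiffOn ℝ n (derivWithin f s) s :=
            hf.derivWithin hu (by exact_mod_cast le_refl (n + 1))
          have hhc : ContDiffOn ℝ n h s := by
            exact ((contDiffOn_const.mul hdφ).mul hf').add (hφ'.mul hdf)
          exact IH s hso x hx φ h hφ' hhc hφx m (by omega)

/-- For a positive integer `N` and functions `f, g` that are `N`-times
differentiable on an open interval `I ⊆ ℝ`, the alternating sum
`∑_{k=0}^{N} (-1)^k C(N,k) g^k D^{N-1}(g^{N-k} f)` vanishes identically on `I`. -/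
theorem alternating_sum_deriv_eq_zero
    (N : ℕ) (hN : 0 < N) (a b : ℝ) (hab : a < b)
    (I : Set ℝ) (hI : I = Set.Ioo a b)
    (f g : ℝ → ℝ) (hf : ContDiffOn ℝ N f I) (hg : ContDiffOn ℝ N g I) :
    ∀ x ∈ I, ∑ k ∈ Finset.range (N + 1),
      ((-1 : ℝ) ^ k * (N.choose k : ℝ) * (g x) ^ k *
        iteratedDerivWithin (N - 1) (fun y => (g y) ^ (N - k) * f y) I x) = 0 := by
  intro x hx
  have hso : IsOpen I := by rw [hI]; exact isOpen_Ioo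
  have hu : UniqueDiffOn ℝ I := hso.uniqueDiffOn
  set c : ℝ := g x with hc
  -- each summand's function is C^(N-1)
  have hcd : ∀ k, ContDiffOn ℝ ((N - 1 : ℕ) : WithTop ℕ∞) (fun y => (g y) ^ (N - k) * f y) I := by
    intro k
    exact ((hg.pow _).mul hf).of_le (by exact_mod_cast Nat.sub_le N 1)
  -- pull constants inside the derivatives
  have step1 : ∀ k, (-1 : ℝ) ^ k * (N.choose k : ℝ) * c ^ k *
      iteratedDerivWithin (N - 1) (fun y => (g y) ^ (N - k) * f y) I x
      = iteratedDerivWithin (N - 1)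
          (fun y => (-1 : ℝ) ^ k * (N.choose k : ℝ) * c ^ k * ((g y) ^ (N - k) * f y)) I x := by
    intro k
    rw [iteratedDerivWithin_const_mul hx hu _ (hcd k x hx)]
  calc ∑ k ∈ Finset.range (N + 1),
      ((-1 : ℝ) ^ k * (N.choose k : ℝ) * c ^ k *
        iteratedDerivWithin (N - 1) (fun y => (g y) ^ (N - k) * f y) I x)
      = ∑ k ∈ Finset.range (N + 1), iteratedDerivWithin (N - 1)
          (fun y => (-1 : ℝ) ^ k * (N.choose k : ℝ) * c ^ k * ((g y) ^ (N - k) * f y)) I x := by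
        exact Finset.sum_congr rfl fun k _ => step1 k
    _ = iteratedDerivWithin (N - 1)
          (fun y => ∑ k ∈ Finset.range (N + 1),
            (-1 : ℝ) ^ k * (N.choose k : ℝ) * c ^ k * ((g y) ^ (N - k) * f y)) I x := by
        refine (iteratedDerivWithin_finset_sum hu hx (N - 1) _ _ ?_).symm
        intro k _
        exact contDiffOn_const.mul (hcd k)
    _ = iteratedDerivWithin (N - 1) (fun y => (g y - c) ^ N * f y) I x := by
        refine iteratedDerivWithin_congr (fun y _ => ?_) hx
        rw [sub_pow]
        rw [Finset.sum_mul]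
        rw [← Finset.sum_range_reflect]
        refine Finset.sum_congr rfl fun k hk => ?_
        have hkN : k ≤ N := by
          have := Finset.mem_range.mp hk; omega
        have h1 : N + 1 - 1 - k = N - k := by omega
        have h2 : N - (N - k) = k := by omega
        have h3 : N.choose (N - k) = N.choose k := Nat.choose_symm hkN
        have h4 : ((-1 : ℝ)) ^ (N - k) = (-1 : ℝ) ^ (k + N) := by
          have : k + N = (N - k) + 2 * k := by omega
          rw [this, pow_add, pow_mul]
          simp
        rw [h1, h2, h3, h4]
        ring
    _ = 0 := by
        have hφ : ContDiffOn ℝ N (fun y => g y - c) I := hg.sub contDiffOn_const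
        exact iteratedDerivWithin_pow_mul_eq_zero N I hso x hx (fun y => g y - c) f hφ hf (show g x - c = 0 by rw [hc, sub_self]) (N - 1)
          (by omega)
end

section
/- Let N be a positive integer, I an open interval, and f, g functions on I that are N-times differentiable, with g nonvanishing on I. Then D^N(f/g) = ((-1)^N / g^{N+1}) · ∑_{k=0}^{N} (-1)^k C(N+1,k) g^k D^N(g^{N-k} f) on I. -/
open scoped BigOperators

private lemma key_vanish (I : Set ℝ) (hu : UniqueDiffOn ℝ I) :
    ∀ (n m : ℕ), n < m → ∀ (g ψ : ℝ → ℝ) (c x : ℝ), x ∈ I →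
      ContDiffOn ℝ n g I → ContDiffOn ℝ n ψ I → g x = c →
      iteratedDerivWithin n (fun y => (g y - c) ^ m * ψ y) I x = 0 := by
  intro n
  induction n with
  | zero =>
    intro m hm g ψ c x hx hg hψ hc
    simp [iteratedDerivWithin_zero, hc, zero_pow (by omega : m ≠ 0)]
  | succ n IH =>
    intro m hm g ψ c x hx hg hψ hc
    obtain ⟨m, rfl⟩ := Nat.exists_eq_succ_of_ne_zero (by omega : m ≠ 0)
    rw [iteratedDerivWithin_succ']
    have hgd : DifferentiableOn ℝ g I := hg.differentiableOn (by simp)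
    have hψd : DifferentiableOn ℝ ψ I := hψ.differentiableOn (by simp)
    have heq : Set.EqOn (derivWithin (fun y => (g y - c) ^ (m + 1) * ψ y) I)
        (fun y => (g y - c) ^ m *
          (((m : ℝ) + 1) * derivWithin g I y * ψ y + (g y - c) * derivWithin ψ I y)) I := by
      intro y hy
      have h1 : HasDerivWithinAt (fun y => (g y - c) ^ (m + 1))
          (((m + 1 : ℕ) : ℝ) * (g y - c) ^ (m + 1 - 1) * derivWithin g I y) I y :=
        (((hgd y hy).hasDerivWithinAt).sub_const c).pow (m + 1)
      have h2 := h1.fun_mul ((hψd y hy).hasDerivWithinAt)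
      rw [h2.derivWithin (hu.uniqueDiffWithinAt hy)]
      push_cast
      ring
    rw [iteratedDerivWithin_congr heq hx]
    refine IH m (by omega) g _ c x hx (hg.of_le (by exact_mod_cast Nat.le_succ n)) ?_ hc
    have hg' : ContDiffOn ℝ n (derivWithin g I) I :=
      hg.derivWithin hu (by exact_mod_cast le_refl (n + 1))
    have hψ' : ContDiffOn ℝ n (derivWithin ψ I) I :=
      hψ.derivWithin hu (by exact_mod_cast le_refl (n + 1))
    have hgn : ContDiffOn ℝ n g I := hg.of_le (by exact_mod_cast Nat.le_succ n)
    have hψn : ContDiffOn ℝ n ψ I := hψ.of_le (by exact_mod_cast Nat.le_succ n)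
    exact ((contDiffOn_const.mul hg').mul hψn).add ((hgn.sub contDiffOn_const).mul hψ')

private lemma iter_sum {I : Set ℝ} (hu : UniqueDiffOn ℝ I) {x : ℝ} (hx : x ∈ I) (n : ℕ)
    (F : ℕ → ℝ → ℝ) (s : Finset ℕ) (hF : ∀ k ∈ s, ContDiffOn ℝ n (F k) I) :
    iteratedDerivWithin n (fun y => ∑ k ∈ s, F k y) I x =
      ∑ k ∈ s, iteratedDerivWithin n (F k) I x := by
  simp only [iteratedDerivWithin_eq_iteratedFDerivWithin]
  rw [← Finset.sum_fn, iteratedFDerivWithin_sum_apply hu hx (fun k hk => hF k hk x hx)]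
  simp

/-- Quotient rule in closed form: for `N ≥ 1`, `f, g` `N`-times differentiable
on an open interval `I` and `g` nonvanishing on `I`,
`D^N(f/g) = ((-1)^N / g^{N+1}) ∑_{k=0}^N (-1)^k C(N+1,k) g^k D^N(g^{N-k} f)` on `I`. -/
theorem iteratedDeriv_div_formula
    (N : ℕ) (hN : 0 < N) (a b : ℝ) (hab : a < b)
    (I : Set ℝ) (hI : I = Set.Ioo a b)
    (f g : ℝ → ℝ) (hf : ContDiffOn ℝ N f I) (hg : ContDiffOn ℝ N g I)
    (hg0 : ∀ x ∈ I, g x ≠ 0) :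
    ∀ x ∈ I, iteratedDerivWithin N (fun y => f y / g y) I x =
      ((-1 : ℝ) ^ N / (g x) ^ (N + 1)) *
        ∑ k ∈ Finset.range (N + 1),
          ((-1 : ℝ) ^ k * ((N + 1).choose k : ℝ) * (g x) ^ k *
            iteratedDerivWithin N (fun y => (g y) ^ (N - k) * f y) I x) := by
  have hIo : IsOpen I := hI ▸ isOpen_Ioo
  have hu : UniqueDiffOn ℝ I := hIo.uniqueDiffOn
  intro x hx
  set c := g x with hcdef
  have hc : c ≠ 0 := hg0 x hx
  have hdiv : ContDiffOn ℝ N (fun y => f y / g y) I := hf.div hg hg0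
  -- the vanishing identity
  have h0 : iteratedDerivWithin N (fun y => (g y - c) ^ (N + 1) * (f y / g y)) I x = 0 :=
    key_vanish I hu N (N + 1) (Nat.lt_succ_self N) g _ c x hx hg hdiv rfl
  -- rewrite the function as a sum on I
  have hEq : Set.EqOn (fun y => (g y - c) ^ (N + 1) * (f y / g y))
      (fun y => (∑ k ∈ Finset.range (N + 1),
          ((-c) ^ k * ((N + 1).choose k : ℝ)) * ((g y) ^ (N - k) * f y)) +
        ((-c) ^ (N + 1) * (f y / g y))) I := by
    intro y hy
    have hgy : g y ≠ 0 := hg0 y hy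
    have hpow : (g y - c) ^ (N + 1) =
        ∑ k ∈ Finset.range (N + 2), (-c) ^ k * (g y) ^ (N + 1 - k) * ((N + 1).choose k : ℝ) := by
      rw [show g y - c = -c + g y by ring, add_pow]
    simp only
    rw [hpow, Finset.sum_mul, Finset.sum_range_succ]
    congr 1
    · refine Finset.sum_congr rfl fun k hk => ?_
      have hkN : k ≤ N := Nat.lt_succ_iff.mp (Finset.mem_range.mp hk)
      have : (g y) ^ (N + 1 - k) = (g y) ^ (N - k) * g y := by
        rw [← pow_succ]; congr 1; omega
      rw [this]
      field_simp
    · simp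
  rw [iteratedDerivWithin_congr hEq hx] at h0
  -- split the iterated derivative
  have hFk : ∀ k ∈ Finset.range (N + 1), ContDiffOn ℝ N
      (fun y => ((-c) ^ k * ((N + 1).choose k : ℝ)) * ((g y) ^ (N - k) * f y)) I :=
    fun k _ => contDiffOn_const.mul ((hg.pow _).mul hf)
  have hS : ContDiffOn ℝ N (fun y => ∑ k ∈ Finset.range (N + 1),
      ((-c) ^ k * ((N + 1).choose k : ℝ)) * ((g y) ^ (N - k) * f y)) I := by
    apply ContDiffOn.sum fun k hk => hFk k hk
  have hT : ContDiffOn ℝ N (fun y => (-c) ^ (N + 1) * (f y / g y)) I :=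
    contDiffOn_const.mul hdiv
  have h0' : iteratedDerivWithin N ((fun y => ∑ k ∈ Finset.range (N + 1),
      ((-c) ^ k * ((N + 1).choose k : ℝ)) * ((g y) ^ (N - k) * f y)) +
      fun y => (-c) ^ (N + 1) * (f y / g y)) I x = 0 := h0
  rw [iteratedDerivWithin_add hx hu (hS x hx) (hT x hx)] at h0'
  replace h0 := h0'
  rw [iter_sum hu hx N _ _ hFk] at h0
  have hsum : ∀ k ∈ Finset.range (N + 1),
      iteratedDerivWithin N (fun y => ((-c) ^ k * ((N + 1).choose k : ℝ)) *
        ((g y) ^ (N - k) * f y)) I x =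
      ((-c) ^ k * ((N + 1).choose k : ℝ)) *
        iteratedDerivWithin N (fun y => (g y) ^ (N - k) * f y) I x :=
    fun k _ => iteratedDerivWithin_const_mul hx hu _ (((hg.pow _).mul hf) x hx)
  rw [Finset.sum_congr rfl hsum] at h0
  rw [iteratedDerivWithin_const_mul hx hu _ (hdiv x hx)] at h0
  -- solve the linear relation
  set Q := iteratedDerivWithin N (fun y => f y / g y) I x with hQ
  set B := ∑ k ∈ Finset.range (N + 1),
      ((-1 : ℝ) ^ k * ((N + 1).choose k : ℝ) * c ^ k *
        iteratedDerivWithin N (fun y => (g y) ^ (N - k) * f y) I x) with hB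
  have hAB : (∑ k ∈ Finset.range (N + 1), ((-c) ^ k * ((N + 1).choose k : ℝ)) *
      iteratedDerivWithin N (fun y => (g y) ^ (N - k) * f y) I x) = B := by
    rw [hB]
    refine Finset.sum_congr rfl fun k hk => ?_
    rw [neg_pow]
    ring
  rw [hAB] at h0
  have hcp : c ^ (N + 1) ≠ 0 := pow_ne_zero _ hc
  rcases Nat.even_or_odd N with hpar | hpar
  · have h1 : (-c) ^ (N + 1) = -(c ^ (N + 1)) := (Odd.neg_pow (by exact hpar.add_one) c)
    rw [h1] at h0
    rw [hpar.neg_one_pow]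
    field_simp
    linarith
  · have h1 : (-c) ^ (N + 1) = c ^ (N + 1) := (Even.neg_pow (by exact hpar.add_one) c)
    rw [h1] at h0
    rw [hpar.neg_one_pow]
    field_simp
    linarith
end

section
/- In the Hardy–Sobolev space H²_β on the unit disk with norm ‖f‖²_β = |f(0)|² + ‖R^β f‖²_{H²}, the monomials z^k are orthogonal, and ‖z^k‖²_β = k^{2β} for k ≥ 1; consequently, the normalized reproducing kernels k_a = K_a/‖K_a‖ converge to 0 weakly as |a| → 1⁻ if and only if β ≤ 1/2. -/
open Filter

/-- The weight sequence of the Hardy–Sobolev space `H²_β` of the unit disk: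
`w β 0 = 1` and `w β k = k^{2β}` for `k ≥ 1`. -/
noncomputable def hsWeight (β : ℝ) (k : ℕ) : ℝ :=
  if k = 0 then 1 else (k : ℝ) ^ (2 * β)

/-- The `H²_β` inner product of two coefficient sequences,
`⟨f, g⟩_β = ∑_k w_β(k) conj(f_k) g_k` (conjugate linear in the first slot,
following Mathlib's convention). -/
noncomputable def hsInner (β : ℝ) (f g : ℕ → ℂ) : ℂ :=
  ∑' k : ℕ, (hsWeight β k : ℂ) * (starRingEnd ℂ) (f k) * g k

/-- The coefficient sequence of the monomial `z^m`. -/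
def monomialCoeff (m : ℕ) : ℕ → ℂ := fun k => if k = m then 1 else 0

/-- The coefficient sequence of the reproducing kernel `K_a` of `H²_β` at `a ∈ 𝔻`:
`K_a(z) = ∑_k w_β(k)⁻¹ conj(a)^k z^k`. -/
noncomputable def hsKernelCoeff (β : ℝ) (a : ℂ) : ℕ → ℂ :=
  fun k => ((hsWeight β k)⁻¹ : ℂ) * ((starRingEnd ℂ) a) ^ k

lemma hsWeight_pos (β : ℝ) (k : ℕ) : 0 < hsWeight β k := by
  unfold hsWeight; split
  · norm_num
  · exact Real.rpow_pos_of_pos (by positivity) _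

lemma hsWeight_zero (β : ℝ) : hsWeight β 0 = 1 := by simp [hsWeight]

lemma hsWeight_ne (β : ℝ) (k : ℕ) (h : k ≠ 0) : hsWeight β k = (k : ℝ) ^ (2 * β) := by
  simp [hsWeight, h]

lemma summable_inv_weight_geom (β : ℝ) {r : ℝ} (h0 : 0 ≤ r) (h1 : r < 1) :
    Summable fun k => (hsWeight β k)⁻¹ * r ^ k := by
  set n : ℕ := ⌈2 * |β|⌉₊ with hn
  have hs1 : Summable fun k : ℕ => ((k : ℝ) ^ n * r ^ k + r ^ k) := by
    refine (summable_pow_mul_geometric_of_norm_lt_one n ?_).add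
      (summable_geometric_of_lt_one h0 h1)
    rwa [Real.norm_eq_abs, abs_of_nonneg h0]
  refine hs1.of_nonneg_of_le
    (fun k => mul_nonneg (inv_nonneg.mpr (hsWeight_pos β k).le) (pow_nonneg h0 k))
    (fun k => ?_)
  rcases Nat.eq_zero_or_pos k with hk | hk
  · subst hk
    have h2 : (hsWeight β 0)⁻¹ * r ^ 0 = 1 := by rw [hsWeight_zero]; norm_num
    rw [h2]
    have h0n : (0:ℝ) ≤ (0:ℝ) ^ n := pow_nonneg le_rfl n
    simp only [Nat.cast_zero, pow_zero, mul_one]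
    linarith
  · have hk1 : (1 : ℝ) ≤ (k : ℝ) := by exact_mod_cast hk
    have h2 : (hsWeight β k)⁻¹ ≤ (k : ℝ) ^ n := by
      rw [hsWeight_ne β k (Nat.pos_iff_ne_zero.mp hk), ← Real.rpow_neg (by linarith),
        ← Real.rpow_natCast]
      refine Real.rpow_le_rpow_of_exponent_le hk1 ?_
      have : 2 * |β| ≤ (n : ℝ) := Nat.le_ceil _
      have := abs_nonneg β
      have := neg_abs_le β
      linarith [le_abs_self β, neg_le_abs β]
    nlinarith [pow_nonneg h0 k, pow_nonneg (le_trans zero_le_one hk1) n]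

lemma summable_inv_weight_iff (β : ℝ) :
    Summable (fun k => (hsWeight β k)⁻¹) ↔ (1 : ℝ) < 2 * β := by
  rw [← summable_nat_add_iff 1]
  have he : (fun n : ℕ => (hsWeight β (n + 1))⁻¹)
      = fun n : ℕ => ((n + 1 : ℕ) : ℝ) ^ (-(2 * β)) := by
    funext n
    rw [hsWeight_ne β (n + 1) (Nat.succ_ne_zero n), ← Real.rpow_neg (by positivity)]
  rw [he, summable_nat_add_iff 1 (f := fun n : ℕ => (n : ℝ) ^ (-(2 * β))),
    Real.summable_nat_rpow]
  constructor <;> intro h <;> linarith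

lemma amgm {w t : ℝ} (hw : 0 < w) (ht : 0 < t) (x u : ℝ) :
    x * u ≤ w * u ^ 2 * (1 / (2 * t)) + w⁻¹ * x ^ 2 * (t / 2) := by
  have he : w * u ^ 2 * (1 / (2 * t)) + w⁻¹ * x ^ 2 * (t / 2)
      = (w * (w * u ^ 2) + t * (t * x ^ 2)) / (2 * t * w) := by
    field_simp
  rw [he, le_div_iff₀ (by positivity)]
  nlinarith [sq_nonneg (w * u - t * x)]

lemma hsInner_kernel (β : ℝ) (a : ℂ) (f : ℕ → ℂ) :
    hsInner β (hsKernelCoeff β a) f = ∑' k : ℕ, a ^ k * f k := by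
  unfold hsInner hsKernelCoeff
  refine tsum_congr fun k => ?_
  have hw : (hsWeight β k : ℂ) ≠ 0 := by
    exact_mod_cast (hsWeight_pos β k).ne'
  rw [map_mul, map_pow, Complex.conj_conj, map_inv₀, Complex.conj_ofReal]
  field_simp

lemma hsDenom_eq (β : ℝ) (a : ℂ) :
    (∑' k : ℕ, hsWeight β k * ‖hsKernelCoeff β a k‖ ^ 2)
      = ∑' k : ℕ, (hsWeight β k)⁻¹ * (‖a‖ ^ 2) ^ k := by
  refine tsum_congr fun k => ?_
  unfold hsKernelCoeff
  rw [norm_mul, norm_pow, RCLike.norm_conj, norm_inv, Complex.norm_real, Real.norm_eq_abs,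
    abs_of_pos (hsWeight_pos β k)]
  have hw := (hsWeight_pos β k).ne'
  field_simp
  ring

lemma hs_S_one_le (β : ℝ) {r : ℝ} (h0 : 0 ≤ r) (h1 : r < 1) :
    1 ≤ ∑' k : ℕ, (hsWeight β k)⁻¹ * r ^ k := by
  have h := Summable.le_tsum (summable_inv_weight_geom β h0 h1) 0
    (fun j _ => mul_nonneg (inv_nonneg.mpr (hsWeight_pos β j).le) (pow_nonneg h0 j))
  simpa [hsWeight_zero] using h

set_option maxHeartbeats 1000000 in
/-- In `H²_β` on the unit disk (coefficient model), the monomials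
`z^k` are orthogonal with `‖z^k‖²_β = k^{2β}` for `k ≥ 1`, and the normalized
reproducing kernels `k_a = K_a / ‖K_a‖` tend to `0` weakly as `|a| → 1⁻`
if and only if `β ≤ 1/2`. -/
theorem monomials_orthogonal_and_weak_convergence_iff (β : ℝ) :
    (∀ m l : ℕ, m ≠ l → hsInner β (monomialCoeff m) (monomialCoeff l) = 0) ∧
    (∀ m : ℕ, 1 ≤ m → hsInner β (monomialCoeff m) (monomialCoeff m) = ((m : ℝ) ^ (2 * β) : ℝ)) ∧
    ((∀ (a : ℕ → ℂ), (∀ j, ‖a j‖ < 1) → Tendsto (fun j => ‖a j‖) atTop (nhds 1) →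
        ∀ f : ℕ → ℂ, Summable (fun k => hsWeight β k * ‖f k‖ ^ 2) →
          Tendsto (fun j =>
              hsInner β (hsKernelCoeff β (a j)) f /
                (Real.sqrt (∑' k : ℕ, hsWeight β k * ‖hsKernelCoeff β (a j) k‖ ^ 2) : ℂ))
            atTop (nhds 0)) ↔ β ≤ 1 / 2) := by
  refine ⟨?_, ?_, ?_, ?_⟩
  · -- orthogonality
    intro m l hml
    unfold hsInner monomialCoeff
    have h : ∀ k : ℕ, (hsWeight β k : ℂ) * (starRingEnd ℂ) (if k = m then (1:ℂ) else 0)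
        * (if k = l then (1:ℂ) else 0) = 0 := by
      intro k
      rcases eq_or_ne k m with rfl | h
      · rw [if_neg hml, mul_zero]
      · rw [if_neg h, map_zero, mul_zero, zero_mul]
    simp only [h, tsum_zero]
  · -- norms of monomials
    intro m hm
    unfold hsInner monomialCoeff
    rw [tsum_eq_single m]
    · simp [hsWeight, Nat.pos_iff_ne_zero.mp hm]
    · intro k hk
      simp [if_neg hk]
  · -- forward: weak convergence → β ≤ 1/2
    intro H
    by_contra hβ
    push_neg at hβ
    have h2β : (1 : ℝ) < 2 * β := by linarith
    set x : ℕ → ℝ := fun j => 1 - 1 / (j + 1) with hxdef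
    have hx0 : ∀ j, 0 ≤ x j := by
      intro j
      have : (1 : ℝ) / (j + 1) ≤ 1 := by
        rw [div_le_one (by positivity)]
        simp [Nat.cast_nonneg]
      simpa [hxdef] using this
    have hx1 : ∀ j, x j < 1 := by
      intro j
      have : (0 : ℝ) < 1 / (j + 1) := by positivity
      simp only [hxdef]
      linarith
    set a : ℕ → ℂ := fun j => ((x j : ℝ) : ℂ) with hadef
    have hnorm : ∀ j, ‖a j‖ = x j := by
      intro j
      rw [hadef]
      simp only [Complex.norm_real, Real.norm_eq_abs]
      exact abs_of_nonneg (hx0 j)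
    have hlt : ∀ j, ‖a j‖ < 1 := fun j => by rw [hnorm]; exact hx1 j
    have hlim : Tendsto (fun j => ‖a j‖) atTop (nhds 1) := by
      simp only [hnorm, hxdef]
      have h0 : Tendsto (fun n : ℕ => 1 / ((n : ℝ) + 1)) atTop (nhds 0) := tendsto_one_div_add_atTop_nhds_zero_nat
      have := (tendsto_const_nhds : Tendsto (fun _ : ℕ => (1 : ℝ)) atTop (nhds 1)).sub h0
      simpa using this
    set f : ℕ → ℂ := fun k => (((hsWeight β k)⁻¹ : ℝ) : ℂ) with hfdef
    have hsumW : Summable (fun k => (hsWeight β k)⁻¹) := (summable_inv_weight_iff β).mpr h2β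
    have hfs : Summable (fun k => hsWeight β k * ‖f k‖ ^ 2) := by
      have he : (fun k => hsWeight β k * ‖f k‖ ^ 2) = fun k => (hsWeight β k)⁻¹ := by
        funext k
        have hw := hsWeight_pos β k
        rw [hfdef]
        simp only [Complex.norm_real, Real.norm_eq_abs, abs_of_pos (inv_pos.mpr hw)]
        field_simp
      rw [he]; exact hsumW
    have hQ := H a hlt hlim f hfs
    set C := ∑' k : ℕ, (hsWeight β k)⁻¹ with hC
    have hC1 : 1 ≤ C := by
      have h := Summable.le_tsum hsumW 0 (fun j _ => inv_nonneg.mpr (hsWeight_pos β j).le)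
      simpa [hsWeight_zero] using h
    have hCs : (0 : ℝ) < Real.sqrt C := Real.sqrt_pos.mpr (by linarith)
    -- lower bound on the quotient
    have key : ∀ j, 1 / Real.sqrt C ≤
        ‖hsInner β (hsKernelCoeff β (a j)) f /
          (Real.sqrt (∑' k : ℕ, hsWeight β k * ‖hsKernelCoeff β (a j) k‖ ^ 2) : ℂ)‖ := by
      intro j
      have hxj0 := hx0 j; have hxj1 := hx1 j
      have hsum1 : Summable fun k => (hsWeight β k)⁻¹ * x j ^ k :=
        summable_inv_weight_geom β hxj0 hxj1
      -- numerator
      have hnum : hsInner β (hsKernelCoeff β (a j)) f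
          = ((∑' k : ℕ, (hsWeight β k)⁻¹ * x j ^ k : ℝ) : ℂ) := by
        rw [hsInner_kernel, Complex.ofReal_tsum]
        refine tsum_congr fun k => ?_
        rw [hadef, hfdef]
        push_cast
        ring
      have hnum1 : (1 : ℝ) ≤ ‖hsInner β (hsKernelCoeff β (a j)) f‖ := by
        rw [hnum, Complex.norm_real, Real.norm_eq_abs]
        have := hs_S_one_le β hxj0 hxj1
        rw [abs_of_nonneg (by linarith)]
        exact this
      -- denominator
      set S := ∑' k : ℕ, hsWeight β k * ‖hsKernelCoeff β (a j) k‖ ^ 2 with hSdef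
      have hSeq : S = ∑' k : ℕ, (hsWeight β k)⁻¹ * (x j ^ 2) ^ k := by
        rw [hSdef, hsDenom_eq, hnorm]
      have hx2 : 0 ≤ x j ^ 2 := sq_nonneg _
      have hx2lt : x j ^ 2 < 1 := by nlinarith
      have hS1 : 1 ≤ S := by rw [hSeq]; exact hs_S_one_le β hx2 hx2lt
      have hSC : S ≤ C := by
        rw [hSeq, hC]
        refine Summable.tsum_le_tsum (fun k => ?_) (summable_inv_weight_geom β hx2 hx2lt) hsumW
        have h1 : (x j ^ 2) ^ k ≤ 1 := pow_le_one₀ hx2 hx2lt.le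
        have h2 : 0 ≤ (hsWeight β k)⁻¹ := inv_nonneg.mpr (hsWeight_pos β k).le
        nlinarith
      have hDpos : (0 : ℝ) < Real.sqrt S := Real.sqrt_pos.mpr (by linarith)
      have hDle : Real.sqrt S ≤ Real.sqrt C := Real.sqrt_le_sqrt hSC
      rw [norm_div, Complex.norm_real, Real.norm_eq_abs, abs_of_pos hDpos]
      exact div_le_div₀ (by linarith) hnum1 hDpos hDle
    have hQn := hQ.norm
    rw [norm_zero] at hQn
    have hev := hQn.eventually_lt_const (by positivity : (0:ℝ) < 1 / Real.sqrt C)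
    obtain ⟨j, hj⟩ := hev.exists
    exact absurd (key j) (not_le.mpr hj)
  · -- backward: β ≤ 1/2 → weak convergence
    intro hβ a hlt hlim f hf
    have hr2lt : ∀ j, ‖a j‖ ^ 2 < 1 := fun j => by nlinarith [hlt j, norm_nonneg (a j)]
    set S : ℕ → ℝ := fun j => ∑' k : ℕ, (hsWeight β k)⁻¹ * (‖a j‖ ^ 2) ^ k with hSdef
    have hSsum : ∀ j, Summable fun k => (hsWeight β k)⁻¹ * (‖a j‖ ^ 2) ^ k :=
      fun j => summable_inv_weight_geom β (sq_nonneg _) (hr2lt j)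
    have hS1 : ∀ j, 1 ≤ S j := fun j => hs_S_one_le β (sq_nonneg _) (hr2lt j)
    -- S tends to infinity
    have hStop : Tendsto S atTop atTop := by
      rw [tendsto_atTop]
      intro M
      have hnW : ¬ Summable (fun k => (hsWeight β k)⁻¹) := by
        rw [summable_inv_weight_iff]
        intro h; linarith
      have hdiv : Tendsto (fun N => ∑ k ∈ Finset.range N, (hsWeight β k)⁻¹) atTop atTop :=
        (not_summable_iff_tendsto_nat_atTop_of_nonneg
          (fun k => inv_nonneg.mpr (hsWeight_pos β k).le)).mp hnW
      obtain ⟨N, hN⟩ := (hdiv.eventually_ge_atTop (M + 1)).exists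
      have hcont : Tendsto (fun j => ∑ k ∈ Finset.range N, (hsWeight β k)⁻¹ * (‖a j‖ ^ 2) ^ k)
          atTop (nhds (∑ k ∈ Finset.range N, (hsWeight β k)⁻¹ * ((1:ℝ) ^ 2) ^ k)) := by
        refine tendsto_finset_sum _ fun k _ => ?_
        exact tendsto_const_nhds.mul ((hlim.pow 2).pow k)
      have hlim1 : (∑ k ∈ Finset.range N, (hsWeight β k)⁻¹ * ((1:ℝ) ^ 2) ^ k)
          = ∑ k ∈ Finset.range N, (hsWeight β k)⁻¹ := by simp
      rw [hlim1] at hcont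
      have hev : ∀ᶠ j in atTop, M < ∑ k ∈ Finset.range N, (hsWeight β k)⁻¹ * (‖a j‖ ^ 2) ^ k :=
        hcont.eventually_const_lt (by linarith)
      filter_upwards [hev] with j hj
      have hle : ∑ k ∈ Finset.range N, (hsWeight β k)⁻¹ * (‖a j‖ ^ 2) ^ k ≤ S j :=
        Summable.sum_le_tsum _ (fun k _ => mul_nonneg (inv_nonneg.mpr (hsWeight_pos β k).le)
          (pow_nonneg (sq_nonneg _) k)) (hSsum j)
      linarith
    rw [NormedAddCommGroup.tendsto_nhds_zero]
    intro ε hε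
    set ε' := ε / 3 with hε'def
    have hε' : 0 < ε' := by positivity
    have hA : Tendsto (fun N => ∑' k : ℕ, (hsWeight β (k + N) * ‖f (k + N)‖ ^ 2)) atTop (nhds 0) :=
      tendsto_sum_nat_add (fun k => hsWeight β k * ‖f k‖ ^ 2)
    obtain ⟨N, hAN⟩ := (hA.eventually_lt_const (by positivity : (0:ℝ) < ε' ^ 2)).exists
    set A := ∑' k : ℕ, hsWeight β (k + N) * ‖f (k + N)‖ ^ 2 with hAdef
    have hA0 : 0 ≤ A := tsum_nonneg fun k => mul_nonneg (hsWeight_pos β _).le (sq_nonneg _)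
    set CN := ∑ k ∈ Finset.range N, ‖f k‖ with hCNdef
    have hCN0 : 0 ≤ CN := Finset.sum_nonneg fun k _ => norm_nonneg _
    -- key pointwise bound
    have key : ∀ j, ‖hsInner β (hsKernelCoeff β (a j)) f‖
        ≤ CN + A * (1 / (2 * (ε' / Real.sqrt (S j)))) + S j * ((ε' / Real.sqrt (S j)) / 2) := by
      intro j
      set r := ‖a j‖ with hrdef
      set t := ε' / Real.sqrt (S j) with htdef
      have hDpos : 0 < Real.sqrt (S j) := Real.sqrt_pos.mpr (by linarith [hS1 j])
      have ht : 0 < t := by positivity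
      have hb : ∀ k, r ^ k * ‖f k‖ ≤ hsWeight β k * ‖f k‖ ^ 2 * (1 / (2 * t))
          + (hsWeight β k)⁻¹ * (r ^ 2) ^ k * (t / 2) := by
        intro k
        have h1 := amgm (hsWeight_pos β k) ht (r ^ k) ‖f k‖
        have hx2 : (r ^ k) ^ 2 = (r ^ 2) ^ k := by
          rw [← pow_mul, ← pow_mul, Nat.mul_comm]
        rwa [hx2] at h1
      have hRHSsum : Summable (fun k => hsWeight β k * ‖f k‖ ^ 2 * (1 / (2 * t))
          + (hsWeight β k)⁻¹ * (r ^ 2) ^ k * (t / 2)) :=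
        (hf.mul_right _).add ((hSsum j).mul_right _)
      have hnsum : Summable (fun k => r ^ k * ‖f k‖) :=
        hRHSsum.of_nonneg_of_le
          (fun k => mul_nonneg (pow_nonneg (norm_nonneg _) k) (norm_nonneg _)) hb
      have he : ∀ k : ℕ, ‖(a j) ^ k * f k‖ = r ^ k * ‖f k‖ := by
        intro k; rw [norm_mul, norm_pow]
      have h1 : ‖hsInner β (hsKernelCoeff β (a j)) f‖ ≤ ∑' k : ℕ, r ^ k * ‖f k‖ := by
        rw [hsInner_kernel]
        calc ‖∑' k : ℕ, (a j) ^ k * f k‖ ≤ ∑' k : ℕ, ‖(a j) ^ k * f k‖ :=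
              norm_tsum_le_tsum_norm (hnsum.congr fun k => (he k).symm)
          _ = ∑' k : ℕ, r ^ k * ‖f k‖ := tsum_congr fun k => he k
      have h2 : (∑' k : ℕ, r ^ k * ‖f k‖)
          = ∑ k ∈ Finset.range N, r ^ k * ‖f k‖ + ∑' k : ℕ, r ^ (k + N) * ‖f (k + N)‖ :=
        (Summable.sum_add_tsum_nat_add N hnsum).symm
      have h3 : ∑ k ∈ Finset.range N, r ^ k * ‖f k‖ ≤ CN := by
        refine Finset.sum_le_sum fun k _ => ?_
        have hr1 : r ^ k ≤ 1 := pow_le_one₀ (norm_nonneg _) (hlt j).le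
        nlinarith [norm_nonneg (f k), pow_nonneg (norm_nonneg (a j)) k]
      have hsumshift : Summable (fun k => hsWeight β (k + N) * ‖f (k + N)‖ ^ 2) :=
        (summable_nat_add_iff N).mpr hf
      have hsumshiftS : Summable (fun k => (hsWeight β (k + N))⁻¹ * (r ^ 2) ^ (k + N)) :=
        (summable_nat_add_iff N).mpr (hSsum j)
      have hL : Summable (fun k => r ^ (k + N) * ‖f (k + N)‖) :=
        (summable_nat_add_iff N).mpr hnsum
      have htail : (∑' k : ℕ, r ^ (k + N) * ‖f (k + N)‖)
          ≤ A * (1 / (2 * t)) + S j * (t / 2) := by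
        have hcomp := Summable.tsum_le_tsum (fun k => hb (k + N)) hL
          ((hsumshift.mul_right _).add (hsumshiftS.mul_right _))
        rw [Summable.tsum_add (hsumshift.mul_right _) (hsumshiftS.mul_right _),
          tsum_mul_right, tsum_mul_right] at hcomp
        have hTS : (∑' k : ℕ, (hsWeight β (k + N))⁻¹ * (r ^ 2) ^ (k + N)) ≤ S j := by
          have hsplit := Summable.sum_add_tsum_nat_add N (hSsum j)
          have hpos : 0 ≤ ∑ k ∈ Finset.range N, (hsWeight β k)⁻¹ * (r ^ 2) ^ k :=
            Finset.sum_nonneg fun k _ =>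
              mul_nonneg (inv_nonneg.mpr (hsWeight_pos β k).le) (pow_nonneg (sq_nonneg _) k)
          have : (∑ k ∈ Finset.range N, (hsWeight β k)⁻¹ * (r ^ 2) ^ k)
              + ∑' k : ℕ, (hsWeight β (k + N))⁻¹ * (r ^ 2) ^ (k + N) = S j := hsplit
          linarith
        have hmul : (∑' k : ℕ, (hsWeight β (k + N))⁻¹ * (r ^ 2) ^ (k + N)) * (t / 2)
            ≤ S j * (t / 2) :=
          mul_le_mul_of_nonneg_right hTS (by positivity)
        calc (∑' k : ℕ, r ^ (k + N) * ‖f (k + N)‖)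
            ≤ A * (1 / (2 * t))
              + (∑' k : ℕ, (hsWeight β (k + N))⁻¹ * (r ^ 2) ^ (k + N)) * (t / 2) := hcomp
          _ ≤ A * (1 / (2 * t)) + S j * (t / 2) := by linarith
      linarith [h1, h2, h3, htail]
    -- conclude
    have hev2 : ∀ᶠ j in atTop, (CN / ε') ^ 2 + 1 ≤ S j := hStop.eventually_ge_atTop _
    filter_upwards [hev2] with j hj
    have hS0 : 0 ≤ S j := le_trans zero_le_one (hS1 j)
    set D := Real.sqrt (S j) with hDdef
    have hDD : D * D = S j := Real.mul_self_sqrt hS0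
    have hD1 : 1 ≤ D := by
      rw [hDdef, show (1:ℝ) = Real.sqrt 1 from (Real.sqrt_one).symm]
      exact Real.sqrt_le_sqrt (hS1 j)
    have hDpos : 0 < D := by linarith
    have hCN_lt : CN < ε' * D := by
      have hlt1 : CN / ε' < D := by
        rw [hDdef]
        rw [Real.lt_sqrt (div_nonneg hCN0 hε'.le)]
        linarith
      calc CN = ε' * (CN / ε') := by field_simp
        _ < ε' * D := by exact mul_lt_mul_of_pos_left hlt1 hε'
    have hQnorm : ‖hsInner β (hsKernelCoeff β (a j)) f /
        (Real.sqrt (∑' k : ℕ, hsWeight β k * ‖hsKernelCoeff β (a j) k‖ ^ 2) : ℂ)‖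
        = ‖hsInner β (hsKernelCoeff β (a j)) f‖ / D := by
      rw [norm_div, Complex.norm_real, Real.norm_eq_abs, hsDenom_eq]
      have hSj : (∑' k : ℕ, (hsWeight β k)⁻¹ * (‖a j‖ ^ 2) ^ k) = S j := rfl
      rw [hSj, ← hDdef, abs_of_pos hDpos]
    rw [hQnorm]
    have hkey := key j
    rw [← hDdef] at hkey
    have e1 : A * (1 / (2 * (ε' / D))) = A * D / (2 * ε') := by
      field_simp
    have e2 : S j * ((ε' / D) / 2) = ε' * D / 2 := by
      rw [← hDD]; field_simp
    rw [e1, e2] at hkey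
    have hmid : A * D / (2 * ε') < ε' * D / 2 := by
      rw [div_lt_div_iff₀ (by positivity) (by positivity)]
      nlinarith
    rw [div_lt_iff₀ hDpos]
    have hεe : ε = 3 * ε' := by rw [hε'def]; ring
    nlinarith [hkey, hmid, hCN_lt, hDpos]
end
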